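/- If every subgraph of a graph G with diameter at most d has at most m edges, then every subgraph of the r-fold blow-up G(r) with diameter at most d has at most r²m edges. -/

import Mathlib

/-- The graph `H` has diameter at most `d` (distances measured within `H`, among
the vertices of `H`, i.e. those in its support). -/
def GraphDiamLE {V : Type*} (H : SimpleGraph V) (d : ℕ) : Prop :=
  ∀ a b : V, a ∈ H.support → b ∈ H.support → H.edist a b ≤ d

/-- If every subgraph of G with diameter at most d has at most m edges,
then every subgraph of the r-fold blow-up G(r) with diameter at most d has at most
r²m edges.  The blow-up is realized on vertex set V × Fin r via `comap Prod.fst`. -/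
theorem stmt_5 {V : Type*} [Fintype V] (G : SimpleGraph V) (r m d : ℕ)
    (h : ∀ H : SimpleGraph V, H ≤ G → GraphDiamLE H d → H.edgeSet.ncard ≤ m) :
    ∀ H : SimpleGraph (V × Fin r), H ≤ SimpleGraph.comap Prod.fst G →
      GraphDiamLE H d → H.edgeSet.ncard ≤ r ^ 2 * m := by
  classical
  intro H hle hdiam
  -- the projection graph
  set H' : SimpleGraph V :=
    { Adj := fun u w => ∃ i j : Fin r, H.Adj (u, i) (w, j)
      symm := by constructor; rintro u w ⟨i, j, hij⟩; exact ⟨j, i, hij.symm⟩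
      loopless := by
        constructor
        rintro u ⟨i, j, hij⟩
        exact G.loopless.irrefl u (hle hij) } with hH'
  have hne : ∀ {a b : V × Fin r}, H.Adj a b → a.1 ≠ b.1 := by
    intro a b hab
    have : G.Adj a.1 b.1 := hle hab
    exact this.ne
  have hhom : ∀ {a b : V × Fin r}, H.Adj a b → H'.Adj a.1 b.1 := by
    intro a b hab
    exact ⟨a.2, b.2, hab⟩
  -- H' is a subgraph of G
  have hle' : H' ≤ G := by
    rintro u w ⟨i, j, hij⟩
    exact hle hij
  -- H' has diameter ≤ d
  have hdiam' : GraphDiamLE H' d := by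
    intro u w hu hw
    obtain ⟨u', hu'⟩ := hu
    obtain ⟨w', hw'⟩ := hw
    obtain ⟨i, j, hij⟩ := hu'
    obtain ⟨i', j', hij'⟩ := hw'
    have h1 : (u, i) ∈ H.support := ⟨(_, j), hij⟩
    have h2 : (w, i') ∈ H.support := ⟨(_, j'), hij'⟩
    have hd := hdiam _ _ h1 h2
    have hnt : H.edist (u, i) (w, i') ≠ ⊤ :=
      fun ht => by simp [ht] at hd
    obtain ⟨p, hp⟩ := SimpleGraph.exists_walk_of_edist_ne_top hnt
    -- map the walk
    have : ∀ {a b : V × Fin r} (q : H.Walk a b), ∃ q' : H'.Walk a.1 b.1, q'.length ≤ q.length := by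
      intro a b q
      induction q with
      | nil => exact ⟨SimpleGraph.Walk.nil, le_refl _⟩
      | cons hadj q ih =>
        obtain ⟨q', hq'⟩ := ih
        exact ⟨SimpleGraph.Walk.cons (hhom hadj) q', by simpa using Nat.succ_le_succ hq'⟩
    obtain ⟨p', hp'⟩ := this p
    calc H'.edist u w ≤ p'.length := SimpleGraph.edist_le p'
      _ ≤ p.length := by exact_mod_cast hp'
      _ = H.edist (u, i) (w, i') := hp
      _ ≤ d := hd
  have hcard' : H'.edgeSet.ncard ≤ m := h H' hle' hdiam'
  -- the counting injection
  letI : LinearOrder V := LinearOrder.lift' (Fintype.equivFin V) (Fintype.equivFin V).injective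
  set F : Sym2 (V × Fin r) → Sym2 V × (Fin r × Fin r) := fun e =>
    (e.map Prod.fst,
      if (Quot.out e).1.1 ≤ (Quot.out e).2.1
        then ((Quot.out e).1.2, (Quot.out e).2.2)
        else ((Quot.out e).2.2, (Quot.out e).1.2)) with hF
  -- key: for e in edgeSet, e is determined by F e
  have key : ∀ e ∈ H.edgeSet, ∃ a b : V × Fin r, e = s(a, b) ∧ a.1 < b.1 ∧
      F e = (s(a.1, b.1), (a.2, b.2)) := by
    intro e he
    have hout : s((Quot.out e).1, (Quot.out e).2) = e := by
      exact Quot.out_eq e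
    have hadj : H.Adj (Quot.out e).1 (Quot.out e).2 := by
      rw [← SimpleGraph.mem_edgeSet, hout]; exact he
    have hne1 : (Quot.out e).1.1 ≠ (Quot.out e).2.1 := hne hadj
    by_cases hc : (Quot.out e).1.1 ≤ (Quot.out e).2.1
    · refine ⟨(Quot.out e).1, (Quot.out e).2, hout.symm, lt_of_le_of_ne hc hne1, ?_⟩
      simp only [hF, hc, if_pos]
      refine Prod.ext ?_ rfl
      conv_lhs => rw [← hout]
      rw [Sym2.map_pair_eq]
    · push_neg at hc
      refine ⟨(Quot.out e).2, (Quot.out e).1, by rw [Sym2.eq_swap]; exact hout.symm, hc, ?_⟩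
      simp only [hF, if_neg (not_le.mpr hc)]
      refine Prod.ext ?_ rfl
      conv_lhs => rw [← hout]
      rw [Sym2.map_pair_eq, Sym2.eq_swap]
  have hinj : Set.InjOn F H.edgeSet := by
    intro e1 h1 e2 h2 heq
    obtain ⟨a1, b1, he1, hlt1, hF1⟩ := key e1 h1
    obtain ⟨a2, b2, he2, hlt2, hF2⟩ := key e2 h2
    rw [hF1, hF2] at heq
    have hs' : s(a1.1, b1.1) = s(a2.1, b2.1) := congrArg Prod.fst heq
    have hp' : (a1.2, b1.2) = (a2.2, b2.2) := congrArg Prod.snd heq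
    rw [Sym2.eq_iff] at hs'
    have hv : a1.1 = a2.1 ∧ b1.1 = b2.1 := by
      rcases hs' with ⟨h1, h2⟩ | ⟨h1, h2⟩
      · exact ⟨h1, h2⟩
      · exfalso
        rw [h1] at hlt1; rw [h2] at hlt1
        exact absurd (hlt1.trans hlt2) (lt_irrefl _)
    obtain ⟨hi, hj⟩ := Prod.mk.inj hp'
    have : a1 = a2 := Prod.ext hv.1 hi
    have hb : b1 = b2 := Prod.ext hv.2 hj
    rw [he1, he2, this, hb]
  have himg : F '' H.edgeSet ⊆ H'.edgeSet ×ˢ (Set.univ : Set (Fin r × Fin r)) := by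
    rintro x ⟨e, he, rfl⟩
    obtain ⟨a, b, he', hlt, hFe⟩ := key e he
    rw [hFe]
    constructor
    · have hadj : H.Adj a b := by rw [← SimpleGraph.mem_edgeSet, ← he']; exact he
      exact hhom hadj
    · trivial
  have hfin : (H'.edgeSet ×ˢ (Set.univ : Set (Fin r × Fin r))).Finite :=
    Set.toFinite _
  calc H.edgeSet.ncard = (F '' H.edgeSet).ncard := (Set.ncard_image_of_injOn hinj).symm
    _ ≤ (H'.edgeSet ×ˢ (Set.univ : Set (Fin r × Fin r))).ncard :=
        Set.ncard_le_ncard himg hfin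
    _ = H'.edgeSet.ncard * r ^ 2 := by
        rw [← Nat.card_coe_set_eq, Nat.card_congr (Equiv.Set.prod _ _), Nat.card_prod,
          Nat.card_coe_set_eq, Nat.card_coe_set_eq, Set.ncard_univ, Nat.card_prod]
        simp [sq]
    _ ≤ m * r ^ 2 := Nat.mul_le_mul_right _ hcard'
    _ = r ^ 2 * m := Nat.mul_comm _ _
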